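/- Every Fσ ideal I on ℕ is uniformly p⁺: there is a Borel function G : (2^ℕ)^ℕ → 2^ℕ such that whenever (x_n)_{n∈ℕ} is a ⊆-decreasing sequence of sets in I⁺, the set G((x_n)_n) belongs to I⁺ and G((x_n)_n) \ x_n is finite for every n. -/

import Mathlib

open Set
set_option maxHeartbeats 1000000

/-- The Cantor space `2^ℕ`: subsets of `ℕ` identified with their characteristic functions. -/
abbrev Cantor : Type := ℕ → Bool

/-- The subset of `ℕ` coded by a point of Cantor space. -/
def toSet (x : Cantor) : Set ℕ := {n | x n = true}

/-- `s ⊑ z` : the finite set `s` is an initial segment of `z ⊆ ℕ`,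
i.e. `s = z ∩ {0,1,…,n}` for some `n`. -/
def InitSeg (s : Finset ℕ) (z : Set ℕ) : Prop := ∃ n : ℕ, (s : Set ℕ) = z ∩ Set.Iic n

/-- `s ⊑ t` for finite sets `s, t`. -/
def InitSegF (s t : Finset ℕ) : Prop := ∃ n : ℕ, s = t ∩ Finset.Iic n

/-- `B` is a front on the set `x ⊆ ℕ`: all members of `B` are subsets of `x`, any two
members of `B` are `⊑`-incomparable, and every infinite subset of `x` has an initial
segment in `B`. -/
def IsFrontOn (B : Set (Finset ℕ)) (x : Set ℕ) : Prop :=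
  (∀ s ∈ B, (s : Set ℕ) ⊆ x) ∧
  (∀ s ∈ B, ∀ t ∈ B, InitSegF s t → s = t) ∧
  (∀ y : Set ℕ, y ⊆ x → y.Infinite → ∃ s ∈ B, InitSeg s y)

/-- `y` is `F`-homogeneous: either every infinite subset of `y` has an initial segment
in `F`, or no finite subset of `y` belongs to `F`. -/
def Homog (F : Set (Finset ℕ)) (y : Set ℕ) : Prop :=
  (∀ z : Set ℕ, z ⊆ y → z.Infinite → ∃ s ∈ F, InitSeg s z) ∨
  (∀ s : Finset ℕ, (s : Set ℕ) ⊆ y → s ∉ F)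

/-- `I` is an ideal on `ℕ`: a family of subsets of `ℕ` closed under taking subsets
and under finite unions. -/
def IsIdeal (I : Set Cantor) : Prop :=
  (∀ x ∈ I, ∀ y : Cantor, toSet y ⊆ toSet x → y ∈ I) ∧
  (∀ x ∈ I, ∀ y ∈ I, (fun n => x n || y n) ∈ I)

/-- `I` is an `Fσ` subset of the Cantor space. -/
def IsFsigma (I : Set Cantor) : Prop :=
  ∃ C : ℕ → Set Cantor, (∀ n, IsClosed (C n)) ∧ I = ⋃ n, C n

/-- A family `C` is tall if every infinite subset of `ℕ` contains an infinite member of `C`. -/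
def Tall (C : Set Cantor) : Prop :=
  ∀ x : Cantor, (toSet x).Infinite → ∃ y ∈ C, (toSet y).Infinite ∧ toSet y ⊆ toSet x

/-- `S` is a Borel selector for the family `C`. -/
def IsSelector (C : Set Cantor) (S : Cantor → Cantor) : Prop :=
  Measurable S ∧ ∀ x : Cantor,
    toSet (S x) ⊆ toSet x ∧ ((toSet x).Infinite → (toSet (S x)).Infinite) ∧ S x ∈ C

/-- A Borel ideal `I` is uniformly selective. -/
def UnifSelective (I : Set Cantor) : Prop :=
  ∃ F : (ℕ → Cantor) → Cantor, Measurable F ∧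
    ∀ xs : ℕ → Cantor, (∀ n, xs n ∉ I) → (∀ n, toSet (xs (n + 1)) ⊆ toSet (xs n)) →
      F xs ∉ I ∧ ∀ n ∈ toSet (F xs), toSet (F xs) \ Set.Iic n ⊆ toSet (xs n)

/-- A Borel ideal `I` is uniformly `p⁺`. -/
def UnifPplus (I : Set Cantor) : Prop :=
  ∃ G : (ℕ → Cantor) → Cantor, Measurable G ∧
    ∀ xs : ℕ → Cantor, (∀ n, xs n ∉ I) → (∀ n, toSet (xs (n + 1)) ⊆ toSet (xs n)) →
      G xs ∉ I ∧ ∀ n, (toSet (G xs) \ toSet (xs n)).Finite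

/-- `(t n)_{n∈ℕ}` is a partition of `x` into finite sets. -/
def FinPartition (x : Cantor) (t : ℕ → Cantor) : Prop :=
  (∀ n, (toSet (t n)).Finite) ∧
  (∀ m n, m ≠ n → Disjoint (toSet (t m)) (toSet (t n))) ∧
  (⋃ n, toSet (t n)) = toSet x

/-- A Borel ideal `I` is uniformly `q⁺`. -/
def UnifQplus (I : Set Cantor) : Prop :=
  ∃ F : Cantor × (ℕ → Cantor) → Cantor, Measurable F ∧
    ∀ (x : Cantor) (t : ℕ → Cantor), x ∉ I → FinPartition x t →
      toSet (F (x, t)) ⊆ toSet x ∧ F (x, t) ∉ I ∧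
      ∀ n, (toSet (F (x, t)) ∩ toSet (t n)).Subsingleton

/-- The ideal `I` is `q⁺`. -/
def Qplus (I : Set Cantor) : Prop :=
  ∀ (x : Cantor) (t : ℕ → Cantor), x ∉ I → FinPartition x t →
    ∃ y : Cantor, toSet y ⊆ toSet x ∧ y ∉ I ∧
      ∀ n, (toSet y ∩ toSet (t n)).Subsingleton

/-- The ideal `I` is selective. -/
def Selective (I : Set Cantor) : Prop :=
  ∀ xs : ℕ → Cantor, (∀ n, xs n ∉ I) → (∀ n, toSet (xs (n + 1)) ⊆ toSet (xs n)) →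
    ∃ x : Cantor, x ∉ I ∧ ∀ n ∈ toSet x, toSet x \ Set.Iic n ⊆ toSet (xs n)

/-- The ideal generated by `K`: `x ∈ IdealGen K` iff `x ⊆ y₁ ∪ … ∪ y_n` for some
`y₁, …, y_n ∈ K`. -/
def IdealGen (K : Set Cantor) : Set Cantor :=
  {x | ∃ l : List Cantor, l ≠ [] ∧ (∀ y ∈ l, y ∈ K) ∧ toSet x ⊆ ⋃ y ∈ l, toSet y}

/-- `↓K = {x : x ⊆ y for some y ∈ K}`. -/
def Down (K : Set Cantor) : Set Cantor := {x | ∃ y ∈ K, toSet x ⊆ toSet y}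

/-- `C` is hereditary: closed under taking subsets. -/
def Hereditary (C : Set Cantor) : Prop :=
  ∀ x ∈ C, ∀ y : Cantor, toSet y ⊆ toSet x → y ∈ C

/-- `A ⊆ 2^ℕ` is `Σ¹₂`: the projection of a coanalytic subset of `2^ℕ × ℕ^ℕ`. -/
def Sigma12 (A : Set Cantor) : Prop :=
  ∃ C : Set (Cantor × (ℕ → ℕ)), MeasureTheory.AnalyticSet Cᶜ ∧
    A = {x | ∃ w : ℕ → ℕ, (x, w) ∈ C}

/-- `A ⊆ 2^ℕ` is `Π¹₂`: the complement of a `Σ¹₂` set. -/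
def Pi12 (A : Set Cantor) : Prop := Sigma12 Aᶜ

-- AUX START
section FsigmaAux

attribute [local instance] Classical.propDecidable

instance : MeasurableSpace (Finset ℕ) := ⊤
instance : MeasurableSingletonClass (Finset ℕ) := ⟨fun _ => trivial⟩

/-- characteristic function of a finite set -/
def chiF (s : Finset ℕ) : Cantor := fun k => decide (k ∈ s)

lemma toSet_chiF (s : Finset ℕ) : toSet (chiF s) = ↑s := by
  ext k; simp [toSet, chiF]

lemma down_isClosed {K : Set Cantor} (hK : IsClosed K) : IsClosed (Down K) := by
  have hS : IsClosed {p : Cantor × Cantor | p.2 ∈ K ∧ ∀ k, p.1 k = true → p.2 k = true} := by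
    apply IsClosed.inter (hK.preimage continuous_snd)
    show IsClosed {p : Cantor × Cantor | ∀ k, p.1 k = true → p.2 k = true}
    have hrw : {p : Cantor × Cantor | ∀ k, p.1 k = true → p.2 k = true}
        = ⋂ k, {p : Cantor × Cantor | p.1 k = true → p.2 k = true} := by
      ext p; simp
    rw [hrw]
    refine isClosed_iInter fun k => ?_
    have : {p : Cantor × Cantor | p.1 k = true → p.2 k = true}
        = ((fun p : Cantor × Cantor => p.1 k) ⁻¹' {true})ᶜ ∪ ((fun p : Cantor × Cantor => p.2 k) ⁻¹' {true}) := by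
      ext p; by_cases h : p.1 k = true <;> simp [h]
    rw [this]
    exact IsClosed.union
      (((isOpen_discrete _).preimage ((continuous_apply k).comp continuous_fst)).isClosed_compl)
      ((isClosed_discrete _).preimage ((continuous_apply k).comp continuous_snd))
  have hcomp : IsCompact {p : Cantor × Cantor | p.2 ∈ K ∧ ∀ k, p.1 k = true → p.2 k = true} :=
    hS.isCompact
  have himg : Down K = Prod.fst '' {p : Cantor × Cantor | p.2 ∈ K ∧ ∀ k, p.1 k = true → p.2 k = true} := by
    ext x
    constructor
    · rintro ⟨y, hy, hxy⟩; exact ⟨(x, y), ⟨hy, fun k hk => hxy hk⟩, rfl⟩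
    · rintro ⟨p, ⟨hp, hsub⟩, rfl⟩; exact ⟨p.2, hp, fun k hk => hsub k hk⟩
  rw [himg]
  exact (hcomp.image continuous_fst).isClosed

lemma finite_approx {K : Set Cantor} (hcl : IsClosed K)
    (hdown : ∀ x ∈ K, ∀ y : Cantor, toSet y ⊆ toSet x → y ∈ K)
    {z : Cantor} (hz : z ∉ K) : ∃ u : Finset ℕ, (↑u : Set ℕ) ⊆ toSet z ∧ chiF u ∉ K := by
  by_contra h
  push_neg at h
  apply hz
  set f : ℕ → Cantor := fun m => chiF ((Finset.Iic m).filter (fun k => z k = true)) with hf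
  have hfK : ∀ m, f m ∈ K := by
    intro m
    apply h
    intro k hk
    simp only [Finset.coe_filter, Set.mem_setOf_eq] at hk
    exact hk.2
  have ht : Filter.Tendsto f Filter.atTop (nhds z) := by
    rw [tendsto_pi_nhds]
    intro k
    apply tendsto_atTop_of_eventually_const (i₀ := k)
    intro m hm
    show chiF _ k = z k
    simp only [chiF, Finset.mem_filter, Finset.mem_Iic]
    cases hzk : z k <;> simp [hm, hzk]
  exact hcl.mem_of_tendsto ht (Filter.Eventually.of_forall hfK)

/-- the selection predicate -/
def PrP (Dn : Set Cantor) (prev : Finset ℕ) (x : Cantor) (u : Finset ℕ) : Prop :=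
  (↑u : Set ℕ) ⊆ ↑prev ∪ toSet x ∧ chiF u ∉ Dn

def PmP (Dn : Set Cantor) (prev : Finset ℕ) (x : Cantor) (m : ℕ) : Prop :=
  (∃ u : Finset ℕ, Encodable.encode u = m ∧ PrP Dn prev x u) ∨ ∀ u, ¬ PrP Dn prev x u

lemma pm_ex (Dn : Set Cantor) (prev : Finset ℕ) (x : Cantor) : ∃ m, PmP Dn prev x m := by
  by_cases h : ∃ u, PrP Dn prev x u
  · obtain ⟨u, hu⟩ := h
    exact ⟨Encodable.encode u, Or.inl ⟨u, rfl, hu⟩⟩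
  · exact ⟨0, Or.inr (fun u hu => h ⟨u, hu⟩)⟩

noncomputable def pickU (Dn : Set Cantor) (prev : Finset ℕ) (x : Cantor) : Finset ℕ :=
  (Encodable.decode (Nat.find (pm_ex Dn prev x))).getD ∅

lemma pickU_spec {Dn : Set Cantor} {prev : Finset ℕ} {x : Cantor}
    (h : ∃ u, PrP Dn prev x u) : PrP Dn prev x (pickU Dn prev x) := by
  have hs := Nat.find_spec (pm_ex Dn prev x)
  rcases hs with ⟨u, hu, hPu⟩ | hall
  · have : pickU Dn prev x = u := by
      simp [pickU, ← hu, Encodable.encodek]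
    rwa [this]
  · exact absurd h.choose_spec (hall h.choose)

lemma measurableSet_PrP (Dn : Set Cantor) (prev : Finset ℕ) (u : Finset ℕ) :
    MeasurableSet {x : Cantor | PrP Dn prev x u} := by
  by_cases hD : chiF u ∈ Dn
  · have : {x : Cantor | PrP Dn prev x u} = ∅ := by
      ext x; simp [PrP, hD]
    rw [this]; exact MeasurableSet.empty
  · have : {x : Cantor | PrP Dn prev x u} = ⋂ k ∈ u, {x : Cantor | k ∈ prev ∨ x k = true} := by
      ext x
      simp only [Set.mem_setOf_eq, PrP, hD, not_false_iff, and_true, Set.mem_iInter]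
      constructor
      · intro hsub k hk
        rcases hsub hk with h | h
        · exact Or.inl h
        · exact Or.inr h
      · intro hall k hk
        rcases hall k hk with h | h
        · exact Or.inl h
        · exact Or.inr h
    rw [this]
    refine MeasurableSet.biInter (Set.to_countable _) fun k _ => ?_
    by_cases hk : k ∈ prev
    · have : {x : Cantor | k ∈ prev ∨ x k = true} = Set.univ := by ext x; simp [hk]
      rw [this]; exact MeasurableSet.univ
    · have : {x : Cantor | k ∈ prev ∨ x k = true} = (fun x : Cantor => x k) ⁻¹' {true} := by
        ext x; simp [hk]
      rw [this]
      exact (measurable_pi_apply k) (MeasurableSet.singleton true)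

lemma measurableSet_PmP (Dn : Set Cantor) (prev : Finset ℕ) (m : ℕ) :
    MeasurableSet {x : Cantor | PmP Dn prev x m} := by
  have : {x : Cantor | PmP Dn prev x m}
      = (⋃ u : Finset ℕ, ⋃ _ : Encodable.encode u = m, {x : Cantor | PrP Dn prev x u})
        ∪ ⋂ u : Finset ℕ, {x : Cantor | PrP Dn prev x u}ᶜ := by
    ext x
    simp only [PmP, Set.mem_union, Set.mem_iUnion, Set.mem_iInter, Set.mem_setOf_eq,
      Set.mem_compl_iff]
    constructor
    · rintro (⟨u, hu, hP⟩ | hall)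
      · exact Or.inl ⟨u, hu, hP⟩
      · exact Or.inr hall
    · rintro (⟨u, hu, hP⟩ | hall)
      · exact Or.inl ⟨u, hu, hP⟩
      · exact Or.inr hall
  rw [this]
  exact MeasurableSet.union
    (MeasurableSet.iUnion fun u => MeasurableSet.iUnion fun _ => measurableSet_PrP Dn prev u)
    (MeasurableSet.iInter fun u => (measurableSet_PrP Dn prev u).compl)

lemma measurable_pickU (Dn : Set Cantor) (prev : Finset ℕ) :
    Measurable (fun x => pickU Dn prev x) := by
  exact Measurable.find (f := fun m (_ : Cantor) => (Encodable.decode (α := Finset ℕ) m).getD ∅)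
    (p := fun m x => PmP Dn prev x m)
    (fun _ => measurable_const) (fun m => measurableSet_PmP Dn prev m) (pm_ex Dn prev)

noncomputable def stepF (Dn : Set Cantor) (prev : Finset ℕ) (x : Cantor) : Finset ℕ :=
  prev ∪ (pickU Dn prev x).filter (fun k => x k = true)

lemma measurable_filterF (u : Finset ℕ) :
    Measurable (fun x : Cantor => u.filter (fun k => x k = true)) := by
  classical
  induction u using Finset.induction_on with
  | empty => simp only [Finset.filter_empty]; exact measurable_const
  | insert a u ha ih =>
      have heq : (fun x : Cantor => (insert a u).filter (fun k => x k = true))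
          = fun x : Cantor => if x a = true then insert a (u.filter (fun k => x k = true))
              else u.filter (fun k => x k = true) := by
        funext x
        rw [Finset.filter_insert]
      rw [heq]
      refine Measurable.ite ?_ (measurable_from_top.comp ih) ih
      have hrw : {x : Cantor | x a = true} = (fun x : Cantor => x a) ⁻¹' {true} := rfl
      rw [hrw]
      exact (measurable_pi_apply a) trivial

lemma measurable_stepF (Dn : Set Cantor) (prev : Finset ℕ) :
    Measurable (fun x => stepF Dn prev x) := by
  have h2 : Measurable (fun p : Cantor × Finset ℕ => prev ∪ p.2.filter (fun k => p.1 k = true)) := by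
    apply measurable_from_prod_countable_left
    intro u
    exact measurable_from_top.comp (measurable_filterF u)
  have h1 : Measurable (fun x : Cantor => (x, pickU Dn prev x)) :=
    measurable_id.prodMk (measurable_pickU Dn prev)
  exact h2.comp h1

noncomputable def tF (D : ℕ → Set Cantor) : ℕ → (ℕ → Cantor) → Finset ℕ
  | 0 => fun xs => stepF (D 0) ∅ (xs 0)
  | (n+1) => fun xs => stepF (D (n+1)) (tF D n xs) (xs (n+1))

lemma measurable_tF (D : ℕ → Set Cantor) : ∀ n, Measurable (tF D n) := by
  intro n
  induction n with
  | zero => exact (measurable_stepF (D 0) ∅).comp (measurable_pi_apply 0)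
  | succ n ih =>
      have houter : Measurable (fun p : Cantor × Finset ℕ => stepF (D (n+1)) p.2 p.1) :=
        measurable_from_prod_countable_left fun prev => measurable_stepF (D (n+1)) prev
      have hinner : Measurable (fun xs : ℕ → Cantor => ((xs (n+1) : Cantor), tF D n xs)) :=
        (measurable_pi_apply (n+1)).prodMk ih
      have h := houter.comp hinner
      show Measurable fun xs => stepF (D (n+1)) (tF D n xs) (xs (n+1))
      exact h

noncomputable def GF (D : ℕ → Set Cantor) : (ℕ → Cantor) → Cantor :=
  fun xs k => decide (∃ n, k ∈ tF D n xs)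

lemma measurable_decide_mem {α : Type*} [MeasurableSpace α] {E : Set α}
    (hE : MeasurableSet E) (P : α → Prop) [∀ x, Decidable (P x)]
    (hP : ∀ x, P x ↔ x ∈ E) : Measurable fun x => decide (P x) := by
  intro s _
  have : (fun x => decide (P x)) ⁻¹' s
      = ((if true ∈ s then E else ∅) ∪ (if false ∈ s then Eᶜ else ∅)) := by
    ext x
    by_cases h : P x
    · by_cases hts : true ∈ s <;>
        simp [Set.mem_preimage, decide_eq_true h, (hP x).mp h, hts]
    · have hd : decide (P x) = false := decide_eq_false h
      have hE' : x ∉ E := fun hx => h ((hP x).mpr hx)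
      by_cases hfs : false ∈ s <;> simp [Set.mem_preimage, hd, hE', hfs]
  rw [this]
  refine MeasurableSet.union ?_ ?_
  · by_cases hts : true ∈ s <;> simp [hts, hE]
  · by_cases hfs : false ∈ s <;> simp [hfs, hE.compl]

lemma measurable_GF (D : ℕ → Set Cantor) : Measurable (GF D) := by
  apply measurable_pi_lambda
  intro k
  have hE : MeasurableSet (⋃ n, tF D n ⁻¹' {s : Finset ℕ | k ∈ s}) :=
    MeasurableSet.iUnion fun n => (measurable_tF D n) trivial
  have hrw : (fun xs => GF D xs k) = fun xs => decide (∃ n, k ∈ tF D n xs) := rfl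
  rw [hrw]
  exact measurable_decide_mem hE (fun xs => ∃ n, k ∈ tF D n xs)
    (fun xs => by simp [Set.mem_iUnion, Set.mem_preimage, Set.mem_setOf_eq])

lemma stepF_spec {Dn : Set Cantor} (hcl : IsClosed Dn)
    (hdown : ∀ x ∈ Dn, ∀ y : Cantor, toSet y ⊆ toSet x → y ∈ Dn)
    (prev : Finset ℕ) {x : Cantor} (hx : x ∉ Dn) :
    prev ⊆ stepF Dn prev x ∧ (↑(stepF Dn prev x) : Set ℕ) ⊆ ↑prev ∪ toSet x ∧
      chiF (stepF Dn prev x) ∉ Dn := by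
  set z : Cantor := fun k => (decide (k ∈ prev) || x k) with hz
  have hzset : toSet z = ↑prev ∪ toSet x := by
    ext k; simp [toSet, hz]
  have hzD : z ∉ Dn := by
    intro h
    exact hx (hdown z h x (by rw [hzset]; exact Set.subset_union_right))
  obtain ⟨u, hu1, hu2⟩ := finite_approx hcl hdown hzD
  have hex : ∃ v, PrP Dn prev x v := ⟨u, by rwa [hzset] at hu1, hu2⟩
  have hps := pickU_spec hex
  refine ⟨Finset.subset_union_left, ?_, ?_⟩
  · intro k hk
    rcases Finset.mem_union.mp hk with h | h
    · exact Or.inl h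
    · exact Or.inr (Finset.mem_filter.mp h).2
  · intro hmem
    apply hps.2
    apply hdown _ hmem
    rw [toSet_chiF, toSet_chiF]
    intro k hk
    rcases hps.1 hk with h | h
    · exact Finset.mem_union.mpr (Or.inl h)
    · exact Finset.mem_union.mpr (Or.inr (Finset.mem_filter.mpr ⟨hk, h⟩))

end FsigmaAux
-- AUX END

/-- Every `Fσ` ideal on `ℕ` is uniformly `p⁺`. -/
theorem fsigma_unif_pplus (I : Set Cantor) (hI : IsIdeal I) (hFs : IsFsigma I) :
    UnifPplus I := by
  classical
  obtain ⟨C, hCcl, hIC⟩ := hFs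
  set D : ℕ → Set Cantor := fun n => Down (C n) with hD
  have hcl : ∀ n, IsClosed (D n) := fun n => down_isClosed (hCcl n)
  have hdown : ∀ n, ∀ x ∈ D n, ∀ y : Cantor, toSet y ⊆ toSet x → y ∈ D n := by
    intro n x hx y hyx
    obtain ⟨w, hw, hxw⟩ := hx
    exact ⟨w, hw, hyx.trans hxw⟩
  have hDI : ∀ n, D n ⊆ I := by
    intro n x hx
    obtain ⟨w, hw, hxw⟩ := hx
    have hwI : w ∈ I := by rw [hIC]; exact Set.mem_iUnion.mpr ⟨n, hw⟩
    exact hI.1 w hwI x hxw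
  refine ⟨GF D, measurable_GF D, ?_⟩
  intro xs hxsI hdec
  have hxsD : ∀ n, xs n ∉ D n := fun n h => hxsI n (hDI n h)
  have hspec : ∀ n, chiF (tF D n xs) ∉ D n := by
    intro n
    cases n with
    | zero => exact (stepF_spec (hcl 0) (hdown 0) ∅ (hxsD 0)).2.2
    | succ n => exact (stepF_spec (hcl (n+1)) (hdown (n+1)) (tF D n xs) (hxsD (n+1))).2.2
  have hmono : ∀ n, tF D n xs ⊆ tF D (n+1) xs := fun n =>
    (stepF_spec (hcl (n+1)) (hdown (n+1)) (tF D n xs) (hxsD (n+1))).1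
  have hmono' : ∀ a b, a ≤ b → tF D a xs ⊆ tF D b xs := by
    intro a b h
    induction b, h using Nat.le_induction with
    | base => exact Finset.Subset.refl _
    | succ b hb ih => exact ih.trans (hmono b)
  have hsub0 : (↑(tF D 0 xs) : Set ℕ) ⊆ toSet (xs 0) := by
    have h := (stepF_spec (hcl 0) (hdown 0) ∅ (hxsD 0)).2.1
    simpa [tF] using h
  have hsubS : ∀ n, (↑(tF D (n+1) xs) : Set ℕ) ⊆ ↑(tF D n xs) ∪ toSet (xs (n+1)) := fun n =>
    (stepF_spec (hcl (n+1)) (hdown (n+1)) (tF D n xs) (hxsD (n+1))).2.1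
  have hanti : ∀ a b, a ≤ b → toSet (xs b) ⊆ toSet (xs a) := by
    intro a b h
    induction b, h using Nat.le_induction with
    | base => exact subset_rfl
    | succ b hb ih => exact (hdec b).trans ih
  have hGset : toSet (GF D xs) = ⋃ n, (↑(tF D n xs) : Set ℕ) := by
    ext k
    simp [toSet, GF, Set.mem_iUnion]
  constructor
  · intro hGI
    rw [hIC] at hGI
    obtain ⟨n, hn⟩ := Set.mem_iUnion.mp hGI
    apply hspec n
    exact hdown n (GF D xs) ⟨GF D xs, hn, subset_rfl⟩ (chiF (tF D n xs))
      (by rw [toSet_chiF, hGset]; exact Set.subset_iUnion (fun m => (↑(tF D m xs) : Set ℕ)) n)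
  · intro n
    have hkey : toSet (GF D xs) \ toSet (xs n) ⊆ ↑(tF D n xs) := by
      intro k hk
      obtain ⟨hkG, hkx⟩ := hk
      rw [hGset] at hkG
      obtain ⟨m, hm⟩ := Set.mem_iUnion.mp hkG
      have hclaim : ∀ m, n ≤ m → (↑(tF D m xs) : Set ℕ) ⊆ ↑(tF D n xs) ∪ toSet (xs n) := by
        intro m hnm
        induction m, hnm using Nat.le_induction with
        | base => exact Set.subset_union_left
        | succ m hm ih =>
            refine (hsubS m).trans ?_
            intro j hj
            rcases hj with h1 | h2
            · exact ih h1
            · exact Or.inr (hanti n (m+1) (by omega) h2)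
      rcases le_or_gt m n with h | h
      · exact Finset.coe_subset.mpr (hmono' m n h) hm
      · rcases hclaim m h.le hm with h1 | h2
        · exact h1
        · exact absurd h2 hkx
    exact Set.Finite.subset (tF D n xs).finite_toSet hkey
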